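/- Consider the isoperimetric problem of minimizing J(x) = ∫₀¹ ( t⁴ + ( ₀D_t^{1/2} x(t) )² ) dt over functions x: [0,1] → ℝ possessing a square-integrable Riemann–Liouville derivative of order 1/2 on (0,1], satisfying x(0) = 0, x(1) = 16/(15·Γ(1/2)), and the constraint ∫₀¹ t²·₀D_t^{1/2} x(t) dt = 1/5. Then x(t) = 16·t^{5/2}/(15·Γ(1/2)) is admissible (its fractional derivative is t², it satisfies the boundary conditions and the constraint), J(x) = 2/5, and J(y) ≥ 2/5 for every admissible y; hence x is a global minimizer. -/

import Mathlib

open MeasureTheory intervalIntegral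

/-- The left Riemann–Liouville fractional derivative of order `α` with base
point `a`: `ₐD_t^α x(t) = (1/Γ(1-α)) · d/dt ∫ₐ^t x(τ)(t-τ)^(-α) dτ`. -/
noncomputable def RLderiv (α a : ℝ) (x : ℝ → ℝ) (t : ℝ) : ℝ :=
  (1 / Real.Gamma (1 - α)) *
    deriv (fun s => ∫ τ in a..s, x τ * (s - τ) ^ (-α)) t

/-- The functional of the isoperimetric problem (Example 3):
`J(x) = ∫₀¹ (t⁴ + (₀D_t^{1/2} x(t))²) dt`. -/
noncomputable def J (x : ℝ → ℝ) : ℝ :=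
  ∫ t in (0:ℝ)..1, (t ^ 4 + (RLderiv (1/2) 0 x t) ^ 2)

/-- Admissibility for the isoperimetric problem: the Riemann–Liouville
derivative of order `1/2` exists on `(0,1]` and is square-integrable, the
boundary conditions `x(0) = 0`, `x(1) = 16/(15Γ(1/2))` hold, and the integral
constraint `∫₀¹ t²·₀D_t^{1/2} x(t) dt = 1/5` is satisfied. -/
def Admissible (x : ℝ → ℝ) : Prop :=
  (∀ t ∈ Set.Ioc (0:ℝ) 1,
      DifferentiableAt ℝ (fun s => ∫ τ in (0:ℝ)..s, x τ * (s - τ) ^ (-(1/2:ℝ))) t) ∧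
  IntervalIntegrable (fun t => (RLderiv (1/2) 0 x t) ^ 2) volume 0 1 ∧
  x 0 = 0 ∧ x 1 = 16 / (15 * Real.Gamma (1/2)) ∧
  ∫ t in (0:ℝ)..1, t ^ 2 * RLderiv (1/2) 0 x t = 1/5

/-- The candidate minimizer of Example 3: `x(t) = 16·t^{5/2}/(15·Γ(1/2))`. -/
noncomputable def xStar (t : ℝ) : ℝ := 16 * t ^ ((5:ℝ)/2) / (15 * Real.Gamma (1/2))

lemma gamma_seven_half' : Real.Gamma (7/2) = 15/8 * Real.sqrt Real.pi := by
  have h1 := Real.Gamma_add_one (s := 5/2) (by norm_num)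
  have h2 := Real.Gamma_add_one (s := 3/2) (by norm_num)
  have h3 := Real.Gamma_add_one (s := 1/2) (by norm_num)
  norm_num at h1 h2 h3
  rw [show (7/2:ℝ) = 5/2 + 1 by norm_num] at h1 ⊢
  rw [h1, h2, h3, Real.Gamma_one_half_eq]; ring

lemma beta_val' : ∫ u in (0:ℝ)..1, u ^ ((5:ℝ)/2) * (1-u) ^ (-(1/2):ℝ) = 5*Real.pi/16 := by
  have h1 : ((∫ u in (0:ℝ)..1, u ^ ((5:ℝ)/2) * (1-u) ^ (-(1/2):ℝ) : ℝ) : ℂ)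
      = Complex.betaIntegral (7/2) (1/2) := by
    rw [← intervalIntegral.integral_ofReal]
    unfold Complex.betaIntegral
    apply intervalIntegral.integral_congr
    intro x hx
    rw [Set.uIcc_of_le (by norm_num : (0:ℝ) ≤ 1), Set.mem_Icc] at hx
    show ((x ^ ((5:ℝ)/2) * (1-x) ^ (-(1/2):ℝ) : ℝ) : ℂ) = _
    rw [Complex.ofReal_mul, Complex.ofReal_cpow hx.1,
      Complex.ofReal_cpow (by linarith [hx.2] : (0:ℝ) ≤ 1 - x)]
    push_cast
    norm_num
  have h2 := Complex.Gamma_mul_Gamma_eq_betaIntegral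
    (s := 7/2) (t := 1/2) (by norm_num) (by norm_num)
  rw [show (7/2 + 1/2 : ℂ) = ((4:ℝ) : ℂ) by norm_num] at h2
  have hG4 : Real.Gamma 4 = 6 := by
    rw [show (4:ℝ) = ((3:ℕ):ℝ)+1 by norm_num, Real.Gamma_nat_eq_factorial]
    norm_num [Nat.factorial]
  rw [show (7/2 : ℂ) = ((7/2 : ℝ) : ℂ) by norm_num,
      show (1/2 : ℂ) = ((1/2 : ℝ) : ℂ) by norm_num, Complex.Gamma_ofReal,
      Complex.Gamma_ofReal, Complex.Gamma_ofReal,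
      hG4, gamma_seven_half', Real.Gamma_one_half_eq] at h2
  have hpi : Real.sqrt Real.pi * Real.sqrt Real.pi = Real.pi :=
    Real.mul_self_sqrt Real.pi_pos.le
  have key : ((15/8*Real.sqrt Real.pi : ℝ):ℂ) * ((Real.sqrt Real.pi:ℝ):ℂ)
      = ((6:ℝ):ℂ) * ((5*Real.pi/16:ℝ):ℂ) := by
    rw [← Complex.ofReal_mul, ← Complex.ofReal_mul]
    norm_cast
    nlinarith [hpi]
  rw [key] at h2
  have h6 : ((6:ℝ):ℂ) ≠ 0 := by norm_num
  have hb := (mul_left_cancel₀ h6 h2).symm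
  rw [show (7/2 : ℂ) = ((7/2 : ℝ):ℂ) by norm_num,
      show (1/2 : ℂ) = ((1/2 : ℝ):ℂ) by norm_num, hb] at h1
  exact_mod_cast h1

lemma scale_int' {s : ℝ} (hs : 0 < s) :
    ∫ τ in (0:ℝ)..s, τ ^ ((5:ℝ)/2) * (s-τ) ^ (-(1/2):ℝ) = s^3 * (5*Real.pi/16) := by
  have step1 : ∫ τ in (0:ℝ)..s, τ ^ ((5:ℝ)/2) * (s-τ) ^ (-(1/2):ℝ)
      = ∫ τ in (0:ℝ)..s, s^2 * ((τ/s) ^ ((5:ℝ)/2) * (1-τ/s) ^ (-(1/2):ℝ)) := by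
    apply intervalIntegral.integral_congr
    intro τ hτ
    rw [Set.uIcc_of_le hs.le, Set.mem_Icc] at hτ
    show τ ^ ((5:ℝ)/2) * (s-τ) ^ (-(1/2):ℝ) = s^2 * ((τ/s) ^ ((5:ℝ)/2) * (1-τ/s) ^ (-(1/2):ℝ))
    have hτs : 0 ≤ τ/s := div_nonneg hτ.1 hs.le
    have h1τs : 0 ≤ 1 - τ/s := by
      rw [sub_nonneg, div_le_one hs]; exact hτ.2
    have e1 : τ = s * (τ/s) := by field_simp
    have e2 : s - τ = s * (1-τ/s) := by field_simp
    rw [show τ ^ ((5:ℝ)/2) = (s * (τ/s)) ^ ((5:ℝ)/2) by rw [← e1],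
      show (s-τ) ^ (-(1/2):ℝ) = (s * (1-τ/s)) ^ (-(1/2):ℝ) by rw [← e2],
      Real.mul_rpow hs.le hτs, Real.mul_rpow hs.le h1τs]
    rw [show s ^ ((5:ℝ)/2) * (τ/s) ^ ((5:ℝ)/2) * (s ^ (-(1/2):ℝ) * (1-τ/s) ^ (-(1/2):ℝ))
      = (s ^ ((5:ℝ)/2) * s ^ (-(1/2):ℝ)) * ((τ/s) ^ ((5:ℝ)/2) * (1-τ/s) ^ (-(1/2):ℝ)) by ring,
      ← Real.rpow_add hs]
    norm_num
  rw [step1, intervalIntegral.integral_const_mul]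
  have := intervalIntegral.integral_comp_div (a := (0:ℝ)) (b := s)
    (f := fun u => u ^ ((5:ℝ)/2) * (1-u) ^ (-(1/2):ℝ)) (c := s) hs.ne'
  simp only [zero_div, div_self hs.ne'] at this
  rw [this, beta_val', smul_eq_mul]
  ring

lemma sqrtpi_pos' : 0 < Real.sqrt Real.pi := Real.sqrt_pos.mpr Real.pi_pos

lemma F_eq' {s : ℝ} (hs : 0 < s) :
    (∫ τ in (0:ℝ)..s, xStar τ * (s-τ) ^ (-(1/2):ℝ))
      = Real.sqrt Real.pi / 3 * s^3 := by
  have : (∫ τ in (0:ℝ)..s, xStar τ * (s-τ) ^ (-(1/2):ℝ))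
      = ∫ τ in (0:ℝ)..s, (16 / (15 * Real.Gamma (1/2))) * (τ ^ ((5:ℝ)/2) * (s-τ) ^ (-(1/2):ℝ)) := by
    congr 1; funext τ; unfold xStar; ring
  rw [this, intervalIntegral.integral_const_mul, scale_int' hs, Real.Gamma_one_half_eq]
  have hpi : Real.sqrt Real.pi * Real.sqrt Real.pi = Real.pi :=
    Real.mul_self_sqrt Real.pi_pos.le
  field_simp
  linear_combination (-15) * hpi

lemma F_ev' {t : ℝ} (ht : 0 < t) :
    (fun s => ∫ τ in (0:ℝ)..s, xStar τ * (s-τ) ^ (-(1/2):ℝ))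
      =ᶠ[nhds t] fun s => Real.sqrt Real.pi / 3 * s^3 := by
  filter_upwards [IsOpen.mem_nhds isOpen_Ioi (Set.mem_Ioi.mpr ht)] with s hs
  exact F_eq' hs

lemma RL_xStar' {t : ℝ} (ht : 0 < t) : RLderiv (1/2) 0 xStar t = t^2 := by
  unfold RLderiv
  rw [show (1:ℝ) - 1/2 = 1/2 by norm_num]
  rw [Filter.EventuallyEq.deriv_eq (F_ev' ht)]
  have hD : HasDerivAt (fun s : ℝ => Real.sqrt Real.pi / 3 * s^3)
      (Real.sqrt Real.pi / 3 * (3 * t^2)) t := (hasDerivAt_pow 3 t).const_mul _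
  rw [hD.deriv, Real.Gamma_one_half_eq]
  field_simp

lemma diff_xStar' {t : ℝ} (ht : 0 < t) :
    DifferentiableAt ℝ (fun s => ∫ τ in (0:ℝ)..s, xStar τ * (s - τ) ^ (-(1/2):ℝ)) t := by
  rw [Filter.EventuallyEq.differentiableAt_iff (F_ev' ht)]
  exact (differentiable_pow 3).differentiableAt.const_mul _

/-- `x(t) = 16·t^{5/2}/(15Γ(1/2))` is admissible for the isoperimetric problem,
its `1/2`-order Riemann–Liouville derivative on `(0,1]` is `t²`, `J(x) = 2/5`,
and `J(y) ≥ 2/5` for every admissible y; hence `x` is a global minimizer. -/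
theorem isoperimetric_global_minimizer :
    (∀ t ∈ Set.Ioc (0:ℝ) 1, RLderiv (1/2) 0 xStar t = t ^ 2) ∧
    Admissible xStar ∧
    J xStar = 2/5 ∧
    ∀ y, Admissible y → 2/5 ≤ J y := by
  have hRL : ∀ t ∈ Set.Ioc (0:ℝ) 1, RLderiv (1/2) 0 xStar t = t ^ 2 :=
    fun t ht => RL_xStar' ht.1
  have hIoc : Set.uIoc (0:ℝ) 1 = Set.Ioc 0 1 := Set.uIoc_of_le (by norm_num)
  have hint4 : IntervalIntegrable (fun t : ℝ => t ^ 4) volume 0 1 :=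
    (continuous_pow 4).intervalIntegrable 0 1
  have hi4 : ∫ t in (0:ℝ)..1, t ^ 4 = 1/5 := by
    rw [integral_pow]; norm_num
  have hsq : IntervalIntegrable (fun t => (RLderiv (1/2) 0 xStar t) ^ 2) volume 0 1 := by
    rw [intervalIntegrable_iff, hIoc]
    refine (hint4.def'.mono_set (by rw [hIoc])).congr_fun ?_ measurableSet_Ioc
    intro t ht
    simp only [hRL t ht]
    ring
  have hconstr : ∫ t in (0:ℝ)..1, t ^ 2 * RLderiv (1/2) 0 xStar t = 1/5 := by
    rw [intervalIntegral.integral_congr_ae (g := fun t : ℝ => t ^ 4)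
      (Filter.Eventually.of_forall (fun t ht => by
        rw [hIoc] at ht; rw [hRL t ht]; ring))]
    exact hi4
  have hJx : J xStar = 2/5 := by
    unfold J
    rw [intervalIntegral.integral_congr_ae (g := fun t : ℝ => t ^ 4 + t ^ 4)
      (Filter.Eventually.of_forall (fun t ht => by
        rw [hIoc] at ht; rw [hRL t ht]; ring))]
    rw [intervalIntegral.integral_add hint4 hint4, hi4]
    norm_num
  refine ⟨hRL, ⟨fun t ht => diff_xStar' ht.1, hsq, ?_, ?_, hconstr⟩, hJx, ?_⟩
  · unfold xStar
    rw [Real.zero_rpow (by norm_num)]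
    simp
  · unfold xStar
    rw [Real.one_rpow]
    ring
  · intro y hy
    obtain ⟨-, hsy, -, -, hcy⟩ := hy
    set g : ℝ → ℝ := RLderiv (1/2) 0 y with hgdef
    have hmeas : Measurable g := by
      simp only [hgdef]
      unfold RLderiv
      exact (measurable_deriv _).const_mul _
    have hprod : IntervalIntegrable (fun t => t ^ 2 * g t) volume 0 1 := by
      apply (hint4.add hsy).mono_fun
        (((continuous_pow 2).measurable).mul hmeas).aestronglyMeasurable
      apply Filter.Eventually.of_forall
      intro t
      simp only [Real.norm_eq_abs, abs_mul, Pi.add_apply, Pi.mul_apply]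
      have h1 : |t ^ 2| * |g t| ≤ t ^ 4 + (g t) ^ 2 := by
        have := sq_abs (g t)
        nlinarith [sq_nonneg (|t ^ 2| - |g t|), sq_abs (t ^ 2), sq_abs (g t),
          abs_nonneg (t ^ 2), abs_nonneg (g t), sq_nonneg (t ^ 2), sq_nonneg (g t)]
      calc |t ^ 2| * |g t| ≤ t ^ 4 + (g t) ^ 2 := h1
        _ ≤ |t ^ 4 + (g t) ^ 2| := le_abs_self _
    have hexp : ∫ t in (0:ℝ)..1, (g t - t ^ 2) ^ 2
        = (∫ t in (0:ℝ)..1, (g t) ^ 2) - 2 * (∫ t in (0:ℝ)..1, t ^ 2 * g t)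
          + ∫ t in (0:ℝ)..1, t ^ 4 := by
      have : (fun t => (g t - t ^ 2) ^ 2)
          = fun t => ((g t) ^ 2 - 2 * (t ^ 2 * g t)) + t ^ 4 := by
        funext t; ring
      rw [this, intervalIntegral.integral_add (hsy.sub (hprod.const_mul 2)) hint4,
        intervalIntegral.integral_sub hsy (hprod.const_mul 2),
        intervalIntegral.integral_const_mul]
    have hnn : 0 ≤ ∫ t in (0:ℝ)..1, (g t - t ^ 2) ^ 2 :=
      intervalIntegral.integral_nonneg (by norm_num) (fun u _ => sq_nonneg _)
    have hgsq : (1:ℝ)/5 ≤ ∫ t in (0:ℝ)..1, (g t) ^ 2 := by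
      rw [hexp, hcy, hi4] at hnn
      linarith
    have hJy : J y = (∫ t in (0:ℝ)..1, t ^ 4) + ∫ t in (0:ℝ)..1, (g t) ^ 2 := by
      unfold J
      rw [intervalIntegral.integral_add hint4 hsy]
    rw [hJy, hi4]
    linarith
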